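/- The composition s₀ ∘ s₁ has order two: (s₀ s₁)² = id, i.e., at every point where all denominators occurring in the fourfold composition are nonzero, applying s₀, s₁, s₀, s₁ in succession returns the original point. -/

import Mathlib

open Finset

noncomputable section

/-- A point `(ε, q, p, x) ∈ ℂ^{n+3} × ℂⁿ × ℂⁿ × ℂⁿ`, where `n = m + 2` (so `n ≥ 2`).
Indices are 0-based: `e ⟨j-1,_⟩` is the paper's `ε_j`, etc. -/
structure GPt (m : ℕ) where
  e : Fin (m + 5) → ℂ
  q : Fin (m + 2) → ℂ
  p : Fin (m + 2) → ℂ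
  x : Fin (m + 2) → ℂ

namespace GPt

variable {m : ℕ}

/-- `Q₁ = Σ_{l=1}^n q_l p_l + (1 − Σ_{l=1}^{n+3} ε_l)/2`. -/
def Q1 (P : GPt m) : ℂ := (∑ l, P.q l * P.p l) + (1 - ∑ j, P.e j) / 2

/-- `Q₂ = Σ_{j=1}^n q_j − 1`. -/
def Q2 (P : GPt m) : ℂ := (∑ j, P.q j) - 1

/-- The index of `ε_{j+3}` (paper numbering) for `j` indexing `q, p, x`. -/
def eIdx (j : Fin (m + 2)) : Fin (m + 5) := ⟨j.val + 3, by omega⟩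

/-- The transformation `s₀`. -/
def s0 (P : GPt m) : GPt m where
  e := fun j => if j = 0 then 1 - P.e 1 else if j = 1 then 1 - P.e 0 else P.e j
  q := fun j => P.p j * (P.q j * P.p j - P.e (eIdx j)) / (P.Q1 * (P.Q1 + P.e 2))
  p := fun j => -(P.Q1 * (P.Q1 + P.e 2)) / P.p j
  x := fun i => 1 / P.x i

/-- The transformation `s₁`. -/
def s1 (P : GPt m) : GPt m where
  e := fun j => P.e (Equiv.swap 0 1 j)
  q := fun j => P.q j / P.x j
  p := fun j => P.x j * P.p j
  x := fun i => 1 / P.x i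

/-- The transformation `s₂`. -/
def s2 (P : GPt m) : GPt m where
  e := fun j => P.e (Equiv.swap 1 2 j)
  q := fun j => P.q j / P.Q2
  p := fun j => (P.p j - P.Q1) * P.Q2
  x := fun i => P.x i / (P.x i - 1)

/-- The transformation `s₃`. -/
def s3 (P : GPt m) : GPt m where
  e := fun j => P.e (Equiv.swap 2 3 j)
  q := fun j => if j = 0 then 1 / P.q 0 else -P.q j / P.q 0
  p := fun j => if j = 0 then -(P.q 0 * P.Q1) else -(P.q 0 * P.p j)
  x := fun i => if i = 0 then 1 / P.x 0 else P.x i / P.x 0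

/-- The transformation `s_k` for `4 ≤ k ≤ n+2`: `ε_k ↔ ε_{k+1}` together with
`(q_{k-3}, p_{k-3}, x_{k-3}) ↔ (q_{k-2}, p_{k-2}, x_{k-2})` (paper numbering). -/
def sMid (k : ℕ) (h : 4 ≤ k ∧ k ≤ m + 4) (P : GPt m) : GPt m where
  e := fun j => P.e (Equiv.swap ⟨k - 1, by omega⟩ ⟨k, by omega⟩ j)
  q := fun j => P.q (Equiv.swap ⟨k - 4, by omega⟩ ⟨k - 3, by omega⟩ j)
  p := fun j => P.p (Equiv.swap ⟨k - 4, by omega⟩ ⟨k - 3, by omega⟩ j)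
  x := fun j => P.x (Equiv.swap ⟨k - 4, by omega⟩ ⟨k - 3, by omega⟩ j)

/-- The transformation `s_{n+3}`: `ε_{n+3} ↦ −ε_{n+3}`, `p_n ↦ p_n − ε_{n+3}/q_n`. -/
def sLast (P : GPt m) : GPt m where
  e := Function.update P.e ⟨m + 4, by omega⟩ (-(P.e ⟨m + 4, by omega⟩))
  q := P.q
  p := Function.update P.p (Fin.last (m + 1))
    (P.p (Fin.last (m + 1)) - P.e ⟨m + 4, by omega⟩ / P.q (Fin.last (m + 1)))
  x := P.x

/-- The family `s_k`, `k = 0, 1, …, n+3` (junk value `id` for `k > n+3`). -/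
def s (k : ℕ) (P : GPt m) : GPt m :=
  if k = 0 then P.s0
  else if k = 1 then P.s1
  else if k = 2 then P.s2
  else if k = 3 then P.s3
  else if h : 4 ≤ k ∧ k ≤ m + 4 then sMid k h P
  else if k = m + 5 then P.sLast
  else P

/-- The nonvanishing, at a given point, of all denominators occurring in `s_k`. -/
def Dfd (k : ℕ) (P : GPt m) : Prop :=
  if k = 0 then
    (∀ j, P.p j ≠ 0) ∧ P.Q1 ≠ 0 ∧ P.Q1 + P.e 2 ≠ 0 ∧ (∀ i, P.x i ≠ 0)
  else if k = 1 then ∀ i, P.x i ≠ 0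
  else if k = 2 then P.Q2 ≠ 0 ∧ ∀ i, P.x i ≠ 1
  else if k = 3 then P.q 0 ≠ 0 ∧ P.x 0 ≠ 0
  else if k = m + 5 then P.q (Fin.last (m + 1)) ≠ 0
  else True

/-- Apply `s_{k₁}, s_{k₂}, …` in succession. -/
def chain : List ℕ → GPt m → GPt m
  | [], P => P
  | k :: ks, P => chain ks (s k P)

/-- All denominators occurring in the successive application of
`s_{k₁}, s_{k₂}, …` are nonzero. -/
def chainDfd : List ℕ → GPt m → Prop
  | [], _ => True
  | k :: ks, P => Dfd k P ∧ chainDfd ks (s k P)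

end GPt

open GPt

namespace GPt

variable {m : ℕ}

/-- Nonvanishing of all denominators occurring in `s₀`. -/
def Dfd0 (P : GPt m) : Prop :=
  (∀ j, P.p j ≠ 0) ∧ P.Q1 ≠ 0 ∧ P.Q1 + P.e 2 ≠ 0 ∧ (∀ i, P.x i ≠ 0)

/-- Nonvanishing of all denominators occurring in `s₁`. -/
def Dfd1 (P : GPt m) : Prop := ∀ i, P.x i ≠ 0

/-- Nonvanishing of all denominators occurring in `s₂`. -/
def Dfd2 (P : GPt m) : Prop := P.Q2 ≠ 0 ∧ ∀ i, P.x i ≠ 1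

/-- Nonvanishing of all denominators occurring in `s₃`. -/
def Dfd3 (P : GPt m) : Prop := P.q 0 ≠ 0 ∧ P.x 0 ≠ 0

/-- Nonvanishing of all denominators occurring in `s_{n+3}`. -/
def DfdLast (P : GPt m) : Prop := P.q (Fin.last (m + 1)) ≠ 0

end GPt

namespace GPt

variable {m : ℕ}

lemma ext' {P Q : GPt m} (he : P.e = Q.e) (hq : P.q = Q.q) (hp : P.p = Q.p)
    (hx : P.x = Q.x) : P = Q := by
  cases P; cases Q; simp_all

lemma s0_e (P : GPt m) (j) :
    (P.s0).e j = if j = 0 then 1 - P.e 1 else if j = 1 then 1 - P.e 0 else P.e j := rfl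

lemma s0_q (P : GPt m) (j) :
    (P.s0).q j = P.p j * (P.q j * P.p j - P.e (eIdx j)) / (P.Q1 * (P.Q1 + P.e 2)) := rfl

lemma s0_p (P : GPt m) (j) : (P.s0).p j = -(P.Q1 * (P.Q1 + P.e 2)) / P.p j := rfl

lemma s0_x (P : GPt m) (i) : (P.s0).x i = 1 / P.x i := rfl

lemma s1_e (P : GPt m) (j) : (P.s1).e j = P.e (Equiv.swap 0 1 j) := rfl

lemma s1_q (P : GPt m) (j) : (P.s1).q j = P.q j / P.x j := rfl

lemma s1_p (P : GPt m) (j) : (P.s1).p j = P.x j * P.p j := rfl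

lemma s1_x (P : GPt m) (i) : (P.s1).x i = 1 / P.x i := rfl

lemma eIdx_ne_zero (j : Fin (m + 2)) : eIdx j ≠ (0 : Fin (m + 5)) := by
  intro h; have := congrArg Fin.val h; simp only [eIdx, Fin.val_zero] at this; omega

lemma eIdx_ne_one (j : Fin (m + 2)) : eIdx j ≠ (1 : Fin (m + 5)) := by
  simp [eIdx, Fin.ext_iff]

lemma one_ne_zero' : (1 : Fin (m + 5)) ≠ 0 := by simp [Fin.ext_iff]
lemma two_ne_zero' : (2 : Fin (m + 5)) ≠ 0 := by simp [Fin.ext_iff, Nat.mod_eq_of_lt (show 2 < m + 5 by omega)]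
lemma two_ne_one' : (2 : Fin (m + 5)) ≠ 1 := by simp [Fin.ext_iff, Nat.mod_eq_of_lt (show 2 < m + 5 by omega)]

lemma sum_decomp (g : Fin (m + 5) → ℂ) :
    ∑ j, g j = g 0 + g 1 + g 2 + ∑ j : Fin (m + 2), g (eIdx j) := by
  rw [Fin.sum_univ_succ, Fin.sum_univ_succ, Fin.sum_univ_succ]
  have h0 : ((0 : Fin (m + 4)).succ : Fin (m + 5)) = 1 := rfl
  have h1 : ((0 : Fin (m + 3)).succ.succ : Fin (m + 5)) = 2 := rfl
  have h2 : ∀ i : Fin (m + 2), (i.succ.succ.succ : Fin (m + 5)) = eIdx i := by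
    intro i; simp [eIdx, Fin.ext_iff]
  simp only [h0, h1, h2]
  ring

lemma e2_s0 (P : GPt m) : (P.s0).e 2 = P.e 2 := by
  rw [s0_e, if_neg two_ne_zero', if_neg two_ne_one']

lemma e2_s1 (P : GPt m) : (P.s1).e 2 = P.e 2 := by
  rw [s1_e, Equiv.swap_apply_of_ne_of_ne two_ne_zero' two_ne_one']

lemma eIdx_s0 (P : GPt m) (j) : (P.s0).e (eIdx j) = P.e (eIdx j) := by
  rw [s0_e, if_neg (eIdx_ne_zero j), if_neg (eIdx_ne_one j)]

lemma eIdx_s1 (P : GPt m) (j) : (P.s1).e (eIdx j) = P.e (eIdx j) := by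
  rw [s1_e, Equiv.swap_apply_of_ne_of_ne (eIdx_ne_zero j) (eIdx_ne_one j)]

lemma Q1_s0 (P : GPt m) (hp : ∀ j, P.p j ≠ 0) (hQ : P.Q1 ≠ 0)
    (hQE : P.Q1 + P.e 2 ≠ 0) : (P.s0).Q1 = -(P.Q1 + P.e 2) := by
  have hsum : ∑ j, (P.s0).q j * (P.s0).p j
      = ∑ j, (P.e (eIdx j) - P.q j * P.p j) := by
    refine Finset.sum_congr rfl fun j _ => ?_
    rw [s0_q, s0_p]
    field_simp [hp j, hQ, hQE]
    ring
  have hse : ∑ j, (P.s0).e j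
      = (1 - P.e 1) + (1 - P.e 0) + P.e 2 + ∑ j : Fin (m + 2), P.e (eIdx j) := by
    rw [sum_decomp]
    rw [show (P.s0).e 0 = 1 - P.e 1 from rfl,
        show (P.s0).e 1 = 1 - P.e 0 by rw [s0_e, if_neg one_ne_zero', if_pos rfl],
        e2_s0, Finset.sum_congr rfl fun j _ => eIdx_s0 P j]
  have hP : P.Q1 = (∑ l, P.q l * P.p l) + (1 - ∑ j, P.e j) / 2 := rfl
  rw [show (P.s0).Q1 = (∑ l, (P.s0).q l * (P.s0).p l) + (1 - ∑ j, (P.s0).e j) / 2 from rfl,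
    hsum, hse, Finset.sum_sub_distrib, hP, sum_decomp P.e]
  ring

lemma Q1_s1 (P : GPt m) (hx : ∀ i, P.x i ≠ 0) : (P.s1).Q1 = P.Q1 := by
  have hsum : ∑ j, (P.s1).q j * (P.s1).p j = ∑ j, P.q j * P.p j := by
    refine Finset.sum_congr rfl fun j _ => ?_
    rw [s1_q, s1_p]
    field_simp [hx j]
  have hse : ∑ j, (P.s1).e j = ∑ j, P.e j := by
    simp only [s1_e]
    exact Equiv.sum_comp (Equiv.swap 0 1) P.e
  rw [show (P.s1).Q1 = (∑ l, (P.s1).q l * (P.s1).p l) + (1 - ∑ j, (P.s1).e j) / 2 from rfl,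
    hsum, hse]
  rfl

end GPt

/-- `(s₀ s₁)² = id`: at every point where all denominators occurring in the
fourfold composition are nonzero, applying `s₀, s₁, s₀, s₁` in succession
returns the original point. -/
theorem s0_s1_order_two (m : ℕ) (P : GPt m)
    (h0 : Dfd0 P) (h1 : Dfd1 P.s0) (h2 : Dfd0 P.s0.s1) (h3 : Dfd1 P.s0.s1.s0) :
    P.s0.s1.s0.s1 = P := by
  obtain ⟨hp, hQ, hQE, hx⟩ := h0
  have hx0 : ∀ i, (P.s0).x i ≠ 0 := fun i => by
    rw [s0_x]; exact one_div_ne_zero (hx i)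
  have hR1 : (P.s0.s1).Q1 = -(P.Q1 + P.e 2) := by
    rw [Q1_s1 _ hx0, Q1_s0 P hp hQ hQE]
  have hRe2 : (P.s0.s1).e 2 = P.e 2 := by rw [e2_s1, e2_s0]
  refine ext' ?_ ?_ ?_ ?_ <;> funext j
  · by_cases h0j : j = 0
    · subst h0j
      rw [s1_e, Equiv.swap_apply_left, s0_e, if_neg one_ne_zero', if_pos rfl,
          s1_e, Equiv.swap_apply_left, s0_e, if_neg one_ne_zero', if_pos rfl]
      ring
    · by_cases h1j : j = 1
      · subst h1j
        rw [s1_e, Equiv.swap_apply_right, s0_e, if_pos rfl,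
            s1_e, Equiv.swap_apply_right, s0_e, if_pos rfl]
        ring
      · rw [s1_e, Equiv.swap_apply_of_ne_of_ne h0j h1j, s0_e, if_neg h0j, if_neg h1j,
            s1_e, Equiv.swap_apply_of_ne_of_ne h0j h1j, s0_e, if_neg h0j, if_neg h1j]
  · simp only [s1_q, s1_p, s1_x, s0_q, s0_p, s0_x]
    rw [eIdx_s1, eIdx_s0, hR1, hRe2]
    rw [show -(P.Q1 + P.e 2) * (-(P.Q1 + P.e 2) + P.e 2) = P.Q1 * (P.Q1 + P.e 2) from by
      ring]
    have hA0 : P.Q1 * (P.Q1 + P.e 2) ≠ 0 := mul_ne_zero hQ hQE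
    generalize hA : P.Q1 * (P.Q1 + P.e 2) = A at hA0 ⊢
    field_simp [hp j, hx j, hA0]
    have hden : P.x j * P.p j * (A * (P.x j * P.p j)) * A ≠ 0 :=
      mul_ne_zero (mul_ne_zero (mul_ne_zero (hx j) (hp j))
        (mul_ne_zero hA0 (mul_ne_zero (hx j) (hp j)))) hA0
    ring
  · simp only [s1_q, s1_p, s1_x, s0_q, s0_p, s0_x]
    rw [hR1, hRe2]
    rw [show -(P.Q1 + P.e 2) * (-(P.Q1 + P.e 2) + P.e 2) = P.Q1 * (P.Q1 + P.e 2) from by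
      ring]
    have hA0 : P.Q1 * (P.Q1 + P.e 2) ≠ 0 := mul_ne_zero hQ hQE
    generalize hA : P.Q1 * (P.Q1 + P.e 2) = A at hA0 ⊢
    field_simp [hp j, hx j, hA0]
  · simp only [s1_x, s0_x]
    rw [one_div_one_div, one_div_one_div]
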